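/- Let A, η ∈ C²(ℝ) be strictly convex with entropy flux q, q' = η'A'. If u_L > u_R > u, then η(u|u_R) - η(u|u_L) < 0 and (q(u;u_R) - q(u;u_L))/(η(u|u_R) - η(u|u_L)) > A'(u). -/

import Mathlib

open Set intervalIntegral

lemma mono_deriv_nonneg' {f : ℝ → ℝ} {x : ℝ} (hm : Monotone f)
    (hd : DifferentiableAt ℝ f x) : 0 ≤ deriv f x := by
  have h := hd.hasDerivAt
  rw [hasDerivAt_iff_tendsto_slope] at h
  refine ge_of_tendsto h ?_
  filter_upwards [self_mem_nhdsWithin] with y hy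
  rcases lt_or_gt_of_ne (hy : y ≠ x) with h' | h'
  · rw [slope_def_field]
    have := div_nonneg (neg_nonneg.2 (show f y - f x ≤ 0 by simpa using hm h'.le))
      (neg_nonneg.2 (show y - x ≤ 0 by linarith))
    rwa [neg_div_neg_eq] at this
  · rw [slope_def_field]
    exact div_nonneg (by simpa using hm h'.le) (by linarith)

theorem stmt_10 (A η q : ℝ → ℝ)
    (hA : ContDiff ℝ 2 A) (hAc : StrictConvexOn ℝ Set.univ A)
    (hη : ContDiff ℝ 2 η) (hηc : StrictConvexOn ℝ Set.univ η)
    (hqd : Differentiable ℝ q)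
    (hq : ∀ u, deriv q u = deriv η u * deriv A u)
    (u uL uR : ℝ) (h1 : u < uR) (h2 : uR < uL) :
    (η u - η uR - deriv η uR * (u - uR)) - (η u - η uL - deriv η uL * (u - uL)) < 0 ∧
      deriv A u <
        ((q u - q uR - deriv η uR * (A u - A uR)) -
            (q u - q uL - deriv η uL * (A u - A uL))) /
          ((η u - η uR - deriv η uR * (u - uR)) -
            (η u - η uL - deriv η uL * (u - uL))) := by
  have hAd : Differentiable ℝ A := hA.differentiable two_ne_zero
  have hηd : Differentiable ℝ η := hη.differentiable two_ne_zero
  have hη2 : ContDiff ℝ 1 (deriv η) := by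
    have h21 : (2 : WithTop ℕ∞) = 1 + 1 := by norm_num
    exact (contDiff_succ_iff_deriv.mp (h21 ▸ hη)).2.2
  have he2d : Differentiable ℝ (deriv η) := hη2.differentiable one_ne_zero
  have he2c : Continuous (deriv (deriv η)) := hη2.continuous_deriv le_rfl
  have hmono : StrictMono (deriv η) :=
    strictMonoOn_univ.mp (hηc.strictMonoOn_deriv (fun x _ => hηd x))
  have hAmono : StrictMono (deriv A) :=
    strictMonoOn_univ.mp (hAc.strictMonoOn_deriv (fun x _ => hAd x))
  have hnn : ∀ v, 0 ≤ deriv (deriv η) v := fun v =>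
    mono_deriv_nonneg' hmono.monotone (he2d v)
  -- slope inequality for η at right endpoint uL
  have hslope : η uL - η uR < deriv η uL * (uL - uR) := by
    have h := hηc.slope_lt_deriv (mem_univ uR) (mem_univ uL) h2 (hηd uL)
    rw [slope_def_field, div_lt_iff₀ (by linarith)] at h
    linarith
  have hmRL : deriv η uR < deriv η uL := hmono h2
  have hD : (η u - η uR - deriv η uR * (u - uR)) -
      (η u - η uL - deriv η uL * (u - uL)) < 0 := by
    nlinarith [mul_pos (sub_pos.mpr hmRL) (sub_pos.mpr h1)]
  refine ⟨hD, ?_⟩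
  -- Part 2
  set c := deriv A u with hc
  set cR := A uR - A u - c * (uR - u) with hcR
  have hcRpos : 0 < cR := by
    have h := hAc.deriv_lt_slope (mem_univ u) (mem_univ uR) h1 (hAd u)
    rw [slope_def_field, lt_div_iff₀ (by linarith)] at h
    simp only [hcR]; linarith
  -- derivative of G
  have hG : ∀ v, HasDerivAt
      (fun w => (q u - q w - deriv η w * (A u - A w)) -
        c * (η u - η w - deriv η w * (u - w)))
      (deriv (deriv η) v * (A v - A u - c * (v - u))) v := by
    intro v
    have h1' : HasDerivAt (fun w => q u - q w - deriv η w * (A u - A w))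
        (0 - deriv q v - (deriv (deriv η) v * (A u - A v) +
          deriv η v * (0 - deriv A v))) v :=
      ((hasDerivAt_const v (q u)).sub (hqd v).hasDerivAt).sub
        (((he2d v).hasDerivAt).mul ((hasDerivAt_const v (A u)).sub (hAd v).hasDerivAt))
    have h2' : HasDerivAt (fun w => η u - η w - deriv η w * (u - w))
        (0 - deriv η v - (deriv (deriv η) v * (u - v) +
          deriv η v * (0 - 1))) v :=
      ((hasDerivAt_const v (η u)).sub (hηd v).hasDerivAt).sub
        (((he2d v).hasDerivAt).mul ((hasDerivAt_const v u).sub (hasDerivAt_id v)))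
    have := h1'.sub (h2'.const_mul c)
    refine this.congr_deriv ?_
    rw [hq v]; ring
  have hg'cont : Continuous (fun v => deriv (deriv η) v * (A v - A u - c * (v - u))) := by
    fun_prop
  have hg'int : IntervalIntegrable
      (fun v => deriv (deriv η) v * (A v - A u - c * (v - u))) MeasureTheory.volume uR uL :=
    hg'cont.intervalIntegrable uR uL
  have hint : ∫ v in uR..uL, deriv (deriv η) v * (A v - A u - c * (v - u)) =
      ((q u - q uL - deriv η uL * (A u - A uL)) -
        c * (η u - η uL - deriv η uL * (u - uL))) -
      ((q u - q uR - deriv η uR * (A u - A uR)) -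
        c * (η u - η uR - deriv η uR * (u - uR))) :=
    integral_eq_sub_of_hasDerivAt (fun v _ => hG v) hg'int
  -- lower bound of the integrand
  have hlow : ∀ v ∈ Icc uR uL, deriv (deriv η) v * cR ≤
      deriv (deriv η) v * (A v - A u - c * (v - u)) := by
    intro v hv
    refine mul_le_mul_of_nonneg_left ?_ (hnn v)
    rcases eq_or_lt_of_le hv.1 with h | h
    · simp [hcR, ← h]
    · have hs := hAc.deriv_lt_slope (mem_univ uR) (mem_univ v) h (hAd uR)
      rw [slope_def_field, lt_div_iff₀ (by linarith)] at hs
      have hcc : c < deriv A uR := hAmono h1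
      have : c * (v - uR) ≤ A v - A uR := by nlinarith
      simp only [hcR]; linarith
  have hlowint : IntervalIntegrable (fun v => deriv (deriv η) v * cR)
      MeasureTheory.volume uR uL :=
    (he2c.mul continuous_const).intervalIntegrable uR uL
  have hmonoint : ∫ v in uR..uL, deriv (deriv η) v * cR ≤
      ∫ v in uR..uL, deriv (deriv η) v * (A v - A u - c * (v - u)) :=
    integral_mono_on h2.le hlowint hg'int hlow
  have hintlow : ∫ v in uR..uL, deriv (deriv η) v * cR =
      (deriv η uL - deriv η uR) * cR := by
    rw [integral_mul_const]
    congr 1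
    exact integral_eq_sub_of_hasDerivAt (fun v _ => (he2d v).hasDerivAt)
      (he2c.intervalIntegrable uR uL)
  have hpos : 0 < (deriv η uL - deriv η uR) * cR :=
    mul_pos (by linarith) hcRpos
  have hkey : ((q u - q uR - deriv η uR * (A u - A uR)) -
      (q u - q uL - deriv η uL * (A u - A uL))) <
      c * ((η u - η uR - deriv η uR * (u - uR)) -
        (η u - η uL - deriv η uL * (u - uL))) := by
    rw [hintlow] at hmonoint
    rw [hint] at hmonoint
    linarith
  rw [lt_div_iff_of_neg hD]
  linarith
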